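/- Let q ≠ 0 and r be real numbers. For every nonnegative integer n, c_n^q(r) = ∑_{k=0}^n ∑_{j=0}^k ((−1)^k / k!) w(n,k) w(k,j) B_j^q(r). -/

import Mathlib

/-- The falling factorial `(x)_k = x(x-1)⋯(x-k+1)`. -/
noncomputable def fallFac (x : ℝ) (k : ℕ) : ℝ := ∏ i ∈ Finset.range k, (x - i)

/-- The generalized falling factorial `(x|q)_k = x(x-q)⋯(x-(k-1)q)`. -/
noncomputable def genFallFac (q x : ℝ) (k : ℕ) : ℝ := ∏ i ∈ Finset.range k, (x - i * q)

/-- The Cauchy polynomials with a `q` parameter of the first kind: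
`c_n^q(z) = ∫_0^1 (x − z | q)_n dx`. -/
noncomputable def cauchyFirst (q z : ℝ) (n : ℕ) : ℝ := ∫ x in (0:ℝ)..1, genFallFac q (x - z) n

lemma fallFac_cast_self (m : ℕ) : fallFac (m : ℝ) m = m.factorial := by
  induction m with
  | zero => simp [fallFac]
  | succ m ih =>
    have key : ∀ (x : ℝ) (k : ℕ), fallFac x (k+1) = x * fallFac (x - 1) k := by
      intro x k
      unfold fallFac
      rw [Finset.prod_range_succ']
      simp only [Nat.cast_zero, sub_zero]
      rw [mul_comm]
      congr 1
      apply Finset.prod_congr rfl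
      intro i _
      push_cast
      ring
    rw [key]
    have : ((m + 1 : ℕ) : ℝ) - 1 = (m : ℝ) := by push_cast; ring
    rw [this, ih]
    push_cast [Nat.factorial_succ]
    ring

lemma fallFac_cast_zero (m i : ℕ) (h : m < i) : fallFac (m : ℝ) i = 0 := by
  apply Finset.prod_eq_zero (Finset.mem_range.2 h)
  simp

lemma ortho_wW (q r : ℝ) (hq : q ≠ 0) (W : ℕ → ℕ → ℝ)
    (hW0 : ∀ n k, n < k → W n k = 0)
    (hW : ∀ n : ℕ, ∀ x : ℝ, (q * x + r) ^ n =
      ∑ k ∈ Finset.range (n + 1), q ^ k * W n k * fallFac x k)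
    (w : ℕ → ℕ → ℝ)
    (hw : ∀ n : ℕ, ∀ x : ℝ, q ^ n * fallFac x n =
      ∑ k ∈ Finset.range (n + 1), w n k * (q * x + r) ^ k)
    (m : ℕ) :
    ∀ i, i ≤ m → (∑ k ∈ Finset.range (m+1), w m k * W k i) = if i = m then 1 else 0 := by
  set a : ℕ → ℝ := fun i => q ^ i * ∑ k ∈ Finset.range (m+1), w m k * W k i with ha
  have key : ∀ x : ℝ, ∑ i ∈ Finset.range (m+1), a i * fallFac x i = q ^ m * fallFac x m := by
    intro x
    rw [hw m x]
    have step1 : ∀ k ∈ Finset.range (m+1),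
        w m k * (q * x + r) ^ k =
        ∑ i ∈ Finset.range (m+1), w m k * (q ^ i * W k i * fallFac x i) := by
      intro k hk
      rw [hW k x, Finset.mul_sum]
      apply Finset.sum_subset
      · exact Finset.range_subset_range.2 (Nat.succ_le_succ (Nat.lt_succ_iff.1 (Finset.mem_range.1 hk)))
      · intro i _ hi
        have : k < i := by
          simp only [Finset.mem_range, not_lt] at hi; omega
        rw [hW0 k i this]; ring
    rw [Finset.sum_congr rfl step1, Finset.sum_comm]
    apply Finset.sum_congr rfl
    intro i _
    simp only [ha]
    simp only [Finset.sum_mul, Finset.mul_sum]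
    apply Finset.sum_congr rfl
    intro k _
    ring
  have main : ∀ i, i ≤ m → a i = if i = m then q ^ m else 0 := by
    intro i
    induction i using Nat.strong_induction_on with
    | _ i ih =>
      intro hi
      have hx := key (i : ℝ)
      rw [Finset.sum_eq_single i] at hx
      · rw [fallFac_cast_self] at hx
        by_cases h : i = m
        · subst h
          rw [fallFac_cast_self] at hx
          rw [if_pos rfl]
          exact mul_right_cancel₀ (Nat.cast_ne_zero.2 i.factorial_ne_zero) hx
        · rw [fallFac_cast_zero i m (lt_of_le_of_ne hi h), mul_zero] at hx
          rw [if_neg h]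
          exact (mul_eq_zero.1 hx).resolve_right (Nat.cast_ne_zero.2 i.factorial_ne_zero)
      · intro b hb hbi
        rcases lt_or_gt_of_ne hbi with hlt | hgt
        · have hbm : b ≠ m := by omega
          rw [ih b hlt (by omega), if_neg hbm, zero_mul]
        · rw [fallFac_cast_zero i b hgt, mul_zero]
      · intro h
        exact absurd (Finset.mem_range.2 (by omega)) h
  intro i hi
  have h := main i hi
  simp only [ha] at h
  by_cases him : i = m
  · subst him
    rw [if_pos rfl] at h ⊢
    exact mul_left_cancel₀ (pow_ne_zero _ hq) (by rw [h, mul_one])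
  · rw [if_neg him] at h ⊢
    exact (mul_eq_zero.1 h).resolve_left (pow_ne_zero _ hq)

lemma cauchyFirst_eq_sum_w (q r : ℝ) (hq : q ≠ 0) (w : ℕ → ℕ → ℝ)
    (hw : ∀ n : ℕ, ∀ x : ℝ, q ^ n * fallFac x n =
      ∑ k ∈ Finset.range (n + 1), w n k * (q * x + r) ^ k) (n : ℕ) :
    cauchyFirst q r n = ∑ k ∈ Finset.range (n + 1), w n k / ((k : ℝ) + 1) := by
  unfold cauchyFirst
  have hpt : ∀ x : ℝ, genFallFac q (x - r) n = ∑ k ∈ Finset.range (n+1), w n k * x ^ k := by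
    intro x
    have hx : q * ((x - r)/q) + r = x := by field_simp; ring
    have h1 := hw n ((x - r)/q)
    rw [hx] at h1
    rw [← h1]
    unfold genFallFac fallFac
    rw [Finset.prod_congr rfl (fun i _ => by field_simp :
      ∀ i ∈ Finset.range n, x - r - (i : ℝ) * q = q * ((x - r)/q - i)),
      Finset.prod_mul_distrib, Finset.prod_const, Finset.card_range]
  rw [intervalIntegral.integral_congr (g := fun x => ∑ k ∈ Finset.range (n+1), w n k * x ^ k)
    (fun x _ => hpt x)]
  rw [intervalIntegral.integral_finset_sum]
  · apply Finset.sum_congr rfl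
    intro k _
    rw [intervalIntegral.integral_const_mul, integral_pow]
    simp [div_eq_mul_inv]
  · intro k _
    exact (continuous_const.mul (continuous_pow k)).intervalIntegrable _ _

/-- `c_n^q(r) = ∑_{k=0}^n ∑_{j=0}^k ((−1)^k/k!) w(n,k) w(k,j) B_j^q(r)`. -/
theorem cauchyFirst_eq_double_sum_bernoulli_q (q r : ℝ) (hq : q ≠ 0)
    (W : ℕ → ℕ → ℝ)
    (hW0 : ∀ n k, n < k → W n k = 0)
    (hW : ∀ n : ℕ, ∀ x : ℝ, (q * x + r) ^ n =
      ∑ k ∈ Finset.range (n + 1), q ^ k * W n k * fallFac x k)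
    (w : ℕ → ℕ → ℝ)
    (hw0 : ∀ n k, n < k → w n k = 0)
    (hw : ∀ n : ℕ, ∀ x : ℝ, q ^ n * fallFac x n =
      ∑ k ∈ Finset.range (n + 1), w n k * (q * x + r) ^ k)
    (B : ℕ → ℝ)
    (hB : ∀ n, B n = ∑ k ∈ Finset.range (n + 1),
      (-1 : ℝ) ^ k * ((k.factorial : ℝ) / ((k : ℝ) + 1)) * W n k)
    (n : ℕ) :
    cauchyFirst q r n = ∑ k ∈ Finset.range (n + 1), ∑ j ∈ Finset.range (k + 1),
      ((-1 : ℝ) ^ k / (k.factorial : ℝ)) * w n k * w k j * B j := by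
  rw [cauchyFirst_eq_sum_w q r hq w hw n]
  apply Finset.sum_congr rfl
  intro k _
  -- compute T k = ∑_{j ≤ k} w k j * B j
  have hT : ∑ j ∈ Finset.range (k+1), w k j * B j
      = (-1 : ℝ) ^ k * ((k.factorial : ℝ) / ((k : ℝ) + 1)) := by
    have step1 : ∀ j ∈ Finset.range (k+1),
        w k j * B j = ∑ i ∈ Finset.range (k+1),
          w k j * ((-1:ℝ)^i * ((i.factorial : ℝ) / ((i:ℝ)+1)) * W j i) := by
      intro j hj
      rw [hB j, Finset.mul_sum]
      apply Finset.sum_subset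
      · exact Finset.range_subset_range.2 (Nat.succ_le_succ (Nat.lt_succ_iff.1 (Finset.mem_range.1 hj)))
      · intro i _ hi
        have : j < i := by
          simp only [Finset.mem_range, not_lt] at hi; omega
        rw [hW0 j i this]; ring
    rw [Finset.sum_congr rfl step1, Finset.sum_comm]
    have step2 : ∀ i ∈ Finset.range (k+1),
        ∑ j ∈ Finset.range (k+1),
          w k j * ((-1:ℝ)^i * ((i.factorial : ℝ) / ((i:ℝ)+1)) * W j i)
        = (-1:ℝ)^i * ((i.factorial : ℝ) / ((i:ℝ)+1)) * (if i = k then 1 else 0) := by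
      intro i hi
      rw [← ortho_wW q r hq W hW0 hW w hw k i (Nat.lt_succ_iff.1 (Finset.mem_range.1 hi))]
      rw [Finset.mul_sum]
      apply Finset.sum_congr rfl
      intro j _
      ring
    rw [Finset.sum_congr rfl step2]
    rw [Finset.sum_eq_single k]
    · simp
    · intro b _ hb
      rw [if_neg hb, mul_zero]
    · intro h
      exact absurd (Finset.mem_range.2 (Nat.lt_succ_self k)) h
  have hfac : (k.factorial : ℝ) ≠ 0 := Nat.cast_ne_zero.2 k.factorial_ne_zero
  have hsgn : ((-1:ℝ))^k * (-1)^k = 1 := by rw [← mul_pow]; norm_num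
  calc w n k / ((k:ℝ)+1)
      = ((-1:ℝ)^k / (k.factorial : ℝ)) * w n k *
        ((-1:ℝ)^k * ((k.factorial : ℝ) / ((k:ℝ)+1))) := by
        have key : ((-1:ℝ)^k / (k.factorial : ℝ)) * w n k *
              ((-1:ℝ)^k * ((k.factorial : ℝ) / ((k:ℝ)+1)))
            = ((-1:ℝ)^k * (-1:ℝ)^k) *
              (w n k * ((k.factorial:ℝ) / (k.factorial:ℝ)) / ((k:ℝ)+1)) := by ring
        rw [key, hsgn, div_self hfac]
        ring
    _ = ∑ j ∈ Finset.range (k+1),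
        ((-1:ℝ)^k / (k.factorial : ℝ)) * w n k * w k j * B j := by
        rw [← hT, Finset.mul_sum]
        apply Finset.sum_congr rfl
        intro j _
        ring
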